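/- Fix γ ≠ 0 and σ > 0, and define ℓ(γ,σ,x) = −log σ − (1 + 1/γ)·log(1 + γ·x/σ) for 0 < x < σ/max(−γ,0) (no upper restriction if γ > 0). If X has the generalized Pareto distribution with survival function (1+γx/σ)^{−1/γ}, γ > −1/2, then −E[∂²ℓ/∂γ² (γ,σ,X)] = 2/((1+γ)(1+2γ)), −E[∂²ℓ/∂σ²(γ,σ,X)]·σ² = 1/(1+2γ), and −E[∂²ℓ/∂γ∂σ(γ,σ,X)]·σ = 1/((1+γ)(1+2γ)). -/

import Mathlib

set_option maxHeartbeats 1000000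

open MeasureTheory

/-- The generalized Pareto log-density `ℓ(γ,σ,x) = -log σ - (1 + 1/γ) log(1 + γx/σ)`. -/
noncomputable def gpLogLik (γ σ x : ℝ) : ℝ :=
  -Real.log σ - (1 + 1/γ) * Real.log (1 + γ * x / σ)

section GPaux

open Real Filter
open scoped ENNReal

/-! ### Derivative computations -/

lemma GP_hasDerivAt_gp1 (σ x : ℝ) {g : ℝ} (hg : g ≠ 0) (hw : 0 < 1 + g * x / σ) :
    HasDerivAt (fun g => gpLogLik g σ x)
      (1/g^2 * Real.log (1 + g*x/σ) - (1+1/g) * ((x/σ)/(1+g*x/σ))) g := by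
  have hwne := ne_of_gt hw
  have hu : HasDerivAt (fun g : ℝ => 1 + g * x / σ) (x/σ) g := by
    simpa using (((hasDerivAt_id g).mul_const x).div_const σ).const_add 1
  have hL : HasDerivAt (fun g : ℝ => Real.log (1 + g * x / σ)) ((x/σ)/(1+g*x/σ)) g := by
    have := (Real.hasDerivAt_log hwne).comp g hu
    simpa [div_eq_inv_mul, Function.comp_def] using this
  have hc : HasDerivAt (fun g : ℝ => 1 + 1/g) (-(1/g^2)) g := by
    simpa [one_div] using ((hasDerivAt_inv hg).const_add 1)
  have h := (hc.mul hL).const_sub (-Real.log σ)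
  have heq : (fun g : ℝ => -Real.log σ - (1 + 1/g) * Real.log (1 + g * x / σ))
      = fun g => gpLogLik g σ x := by
    funext g; rw [gpLogLik]
  simp only [Pi.mul_def, Pi.add_def, Pi.sub_def, Pi.neg_def, Pi.inv_def] at h
  rw [heq] at h
  refine h.congr_deriv ?_
  ring

lemma GP_hasDerivAt_gp2 (σ x : ℝ) {g : ℝ} (hg : g ≠ 0) (hw : 0 < 1 + g * x / σ) :
    HasDerivAt (fun g : ℝ => 1/g^2 * Real.log (1 + g*x/σ) - (1+1/g) * ((x/σ)/(1+g*x/σ)))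
      (-(2/g^3) * Real.log (1 + g*x/σ) + (2/g^2) * ((x/σ)/(1+g*x/σ))
        + (1+1/g) * ((x/σ)/(1+g*x/σ))^2) g := by
  have hwne := ne_of_gt hw
  have hu : HasDerivAt (fun g : ℝ => 1 + g * x / σ) (x/σ) g := by
    simpa using (((hasDerivAt_id g).mul_const x).div_const σ).const_add 1
  have hL : HasDerivAt (fun g : ℝ => Real.log (1 + g * x / σ)) ((x/σ)/(1+g*x/σ)) g := by
    have := (Real.hasDerivAt_log hwne).comp g hu
    simpa [div_eq_inv_mul, Function.comp_def] using this
  have hc : HasDerivAt (fun g : ℝ => 1 + 1/g) (-(1/g^2)) g := by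
    simpa [one_div] using ((hasDerivAt_inv hg).const_add 1)
  have h2 : HasDerivAt (fun g : ℝ => 1/g^2) (-(2/g^3)) g := by
    have := (hasDerivAt_pow 2 g).inv (pow_ne_zero 2 hg)
    simp only [one_div]
    refine this.congr_deriv ?_
    field_simp
    ring
  have h3 : HasDerivAt (fun g : ℝ => (x/σ)/(1+g*x/σ))
      (-((x/σ) * (x/σ) / (1+g*x/σ)^2)) g := by
    have := (hu.inv hwne).const_mul (x/σ)
    simp only [div_eq_mul_inv]
    refine this.congr_deriv ?_
    field_simp
  have h := (h2.mul hL).sub (hc.mul h3)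
  refine h.congr_deriv ?_
  rw [div_pow]
  ring

lemma GP_hasDerivAt_gps1 (γ x : ℝ) (hγ0 : γ ≠ 0) {s : ℝ} (hs : 0 < s) (hw : 0 < s + γ*x) :
    HasDerivAt (fun s => gpLogLik γ s x)
      (-(1/s) + (1+1/γ) * (γ*x) / (s*(s+γ*x))) s := by
  have hwσ : 0 < 1 + γ*x/s := by
    have h : 1 + γ*x/s = (s+γ*x)/s := by field_simp
    rw [h]; positivity
  have hu : HasDerivAt (fun s : ℝ => 1 + γ*x/s) (-(γ*x)/s^2) s := by
    have h := ((hasDerivAt_inv (ne_of_gt hs)).const_mul (γ*x)).const_add 1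
    simp only [div_eq_mul_inv]
    refine h.congr_deriv ?_
    ring
  have hL : HasDerivAt (fun s : ℝ => Real.log (1 + γ*x/s))
      ((-(γ*x)/s^2)/(1+γ*x/s)) s := by
    have := (Real.hasDerivAt_log (ne_of_gt hwσ)).comp s hu
    simpa [div_eq_inv_mul, Function.comp_def] using this
  have h := ((Real.hasDerivAt_log (ne_of_gt hs)).neg).sub (hL.const_mul (1+1/γ))
  have heq : (fun s : ℝ => -Real.log s - (1+1/γ) * Real.log (1 + γ*x/s))
      = fun s => gpLogLik γ s x := by
    funext s; rw [gpLogLik]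
  simp only [Pi.mul_def, Pi.add_def, Pi.sub_def, Pi.neg_def, Pi.inv_def] at h
  rw [heq] at h
  refine h.congr_deriv ?_
  have h1 : (1 : ℝ) + γ*x/s ≠ 0 := ne_of_gt hwσ
  have h2 : s + γ*x ≠ 0 := ne_of_gt hw
  field_simp
  ring

lemma GP_hasDerivAt_gps2 (γ x : ℝ) (hγ0 : γ ≠ 0) {s : ℝ} (hs : 0 < s) (hw : 0 < s + γ*x) :
    HasDerivAt (fun s : ℝ => -(1/s) + (1+1/γ) * (γ*x) / (s*(s+γ*x)))
      (1/s^2 - (1+1/γ) * (γ*x) * (2*s+γ*x) / (s*(s+γ*x))^2) s := by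
  have hne : s*(s+γ*x) ≠ 0 := by positivity
  have hinv : HasDerivAt (fun s : ℝ => -(1/s)) (1/s^2) s := by
    have := (hasDerivAt_inv (ne_of_gt hs)).neg
    simpa [one_div, Pi.neg_def] using this
  have hq : HasDerivAt (fun s : ℝ => s*(s+γ*x)) (2*s+γ*x) s := by
    have := (hasDerivAt_id' (x := s)).mul ((hasDerivAt_id' (x := s)).add_const (γ*x))
    refine this.congr_deriv ?_
    ring
  have hB := (hq.inv hne).const_mul ((1+1/γ)*(γ*x))
  have h := hinv.add hB
  have heq : (fun s : ℝ => -(1/s) + (1+1/γ)*(γ*x) * (s*(s+γ*x))⁻¹)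
      = (fun s : ℝ => -(1/s) + (1+1/γ) * (γ*x) / (s*(s+γ*x))) := by
    funext s; ring
  simp only [Pi.mul_def, Pi.add_def, Pi.sub_def, Pi.neg_def, Pi.inv_def] at h
  rw [heq] at h
  refine h.congr_deriv ?_
  field_simp
  ring

lemma GP_cross_hasDerivAt (σ x : ℝ) (hσ : 0 < σ) {γ : ℝ} (hγ0 : γ ≠ 0) (hw : 0 < σ + γ*x) :
    HasDerivAt (fun g : ℝ => -(1/σ) + (1+1/g) * (g*x) / (σ*(σ+g*x)))
      (x*(σ-x)/(σ*(σ+γ*x)^2)) γ := by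
  have hne : σ*(σ+γ*x) ≠ 0 := by positivity
  have hc : HasDerivAt (fun g : ℝ => 1 + 1/g) (-(1/γ^2)) γ := by
    simpa [one_div] using ((hasDerivAt_inv hγ0).const_add 1)
  have hA := hc.mul ((hasDerivAt_id' (x := γ)).mul_const x)
  have hq : HasDerivAt (fun g : ℝ => σ*(σ+g*x)) (σ*x) γ := by
    have := (((hasDerivAt_id' (x := γ)).mul_const x).const_add σ).const_mul σ
    simpa using this
  have hB := hq.inv hne
  have h := (hA.mul hB).const_add (-(1/σ))
  have heq : (fun g : ℝ => -(1/σ) + (1+1/g)*(g*x) * (σ*(σ+g*x))⁻¹)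
      = (fun g : ℝ => -(1/σ) + (1+1/g) * (g*x) / (σ*(σ+g*x))) := by
    funext g; ring
  simp only [Pi.mul_def, Pi.add_def, Pi.sub_def, Pi.neg_def, Pi.inv_def] at h
  rw [heq] at h
  refine h.congr_deriv ?_
  field_simp
  ring

lemma GP_deriv2_gamma (σ x : ℝ) {γ : ℝ} (hγ0 : γ ≠ 0) (hw : 0 < 1 + γ*x/σ) :
    deriv (deriv fun g => gpLogLik g σ x) γ =
      -(2/γ^3) * Real.log (1 + γ*x/σ) + (2/γ^2) * ((x/σ)/(1+γ*x/σ))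
        + (1+1/γ) * ((x/σ)/(1+γ*x/σ))^2 := by
  have hcont : ContinuousAt (fun g : ℝ => 1 + g * x / σ) γ := by fun_prop
  have hev : (deriv fun g => gpLogLik g σ x)
      =ᶠ[nhds γ] (fun g => 1/g^2 * Real.log (1 + g*x/σ) - (1+1/g) * ((x/σ)/(1+g*x/σ))) := by
    filter_upwards [eventually_ne_nhds hγ0, hcont.eventually (eventually_gt_nhds hw)]
      with g hg hw'
    exact (GP_hasDerivAt_gp1 σ x hg hw').deriv
  rw [hev.deriv_eq]
  exact (GP_hasDerivAt_gp2 σ x hγ0 hw).deriv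

lemma GP_deriv2_sigma (γ x : ℝ) (hγ0 : γ ≠ 0) {σ : ℝ} (hσ : 0 < σ) (hw : 0 < σ + γ*x) :
    deriv (deriv fun s => gpLogLik γ s x) σ =
      1/σ^2 - (1+1/γ) * (γ*x) * (2*σ+γ*x) / (σ*(σ+γ*x))^2 := by
  have hcont : ContinuousAt (fun s : ℝ => s + γ * x) σ := by fun_prop
  have hev : (deriv fun s => gpLogLik γ s x)
      =ᶠ[nhds σ] (fun s => -(1/s) + (1+1/γ) * (γ*x) / (s*(s+γ*x))) := by
    filter_upwards [eventually_gt_nhds hσ, hcont.eventually (eventually_gt_nhds hw)]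
      with s hs hw'
    exact (GP_hasDerivAt_gps1 γ x hγ0 hs hw').deriv
  rw [hev.deriv_eq]
  exact (GP_hasDerivAt_gps2 γ x hγ0 hσ hw).deriv

lemma GP_deriv_cross (x : ℝ) {γ σ : ℝ} (hγ0 : γ ≠ 0) (hσ : 0 < σ) (hw : 0 < σ + γ*x) :
    deriv (fun g => deriv (fun s => gpLogLik g s x) σ) γ =
      x*(σ-x)/(σ*(σ+γ*x)^2) := by
  have hcont : ContinuousAt (fun g : ℝ => σ + g * x) γ := by fun_prop
  have hev : (fun g => deriv (fun s => gpLogLik g s x) σ)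
      =ᶠ[nhds γ] (fun g => -(1/σ) + (1+1/g) * (g*x) / (σ*(σ+g*x))) := by
    filter_upwards [eventually_ne_nhds hγ0, hcont.eventually (eventually_gt_nhds hw)]
      with g hg hw'
    exact (GP_hasDerivAt_gps1 g x hg hσ hw').deriv
  rw [hev.deriv_eq]
  exact (GP_cross_hasDerivAt σ x hσ hγ0 hw).deriv

/-! ### Identification of the measure with a pushforward of the uniform measure -/

lemma GP_Tpos {γ σ : ℝ} (hγ0 : γ ≠ 0) (hσ : 0 < σ) {v : ℝ} (hv : v ∈ Set.Ioo (0:ℝ) 1) :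
    0 < σ * (v ^ (-γ) - 1) / γ := by
  rcases hγ0.lt_or_gt with hneg | hpos
  · have h1 : v ^ (-γ) < 1 := Real.rpow_lt_one hv.1.le hv.2 (by linarith)
    have : σ * (v ^ (-γ) - 1) < 0 := by nlinarith
    exact div_pos_of_neg_of_neg this hneg
  · have h1 : 1 < v ^ (-γ) :=
      (Real.one_lt_rpow_iff_of_pos hv.1).2 (Or.inr ⟨hv.2, by linarith⟩)
    apply div_pos _ hpos
    nlinarith

lemma GP_Tgt_iff {γ σ a : ℝ} (hγ0 : γ ≠ 0) (hσ : 0 < σ) (hb : 0 < 1 + γ * a / σ)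
    {v : ℝ} (hv : 0 < v) :
    a < σ * (v ^ (-γ) - 1) / γ ↔ v < (1 + γ * a / σ) ^ (-(1/γ)) := by
  have hcpos : 0 < (1 + γ * a / σ) ^ (-(1/γ)) := Real.rpow_pos_of_pos hb _
  have hcb : ((1 + γ * a / σ) ^ (-(1/γ))) ^ (-γ) = 1 + γ * a / σ := by
    rw [← Real.rpow_mul hb.le]
    have : -(1/γ) * -γ = 1 := by field_simp
    rw [this, Real.rpow_one]
  have hbσ : (1 + γ * a / σ) * σ = σ + γ * a := by field_simp
  rcases hγ0.lt_or_gt with hneg | hpos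
  · rw [lt_div_iff_of_neg hneg]
    have h2 : v ^ (-γ) < (1 + γ * a / σ) ↔ v < (1 + γ * a / σ) ^ (-(1/γ)) := by
      nth_rewrite 1 [← hcb]
      exact Real.rpow_lt_rpow_iff hv.le hcpos.le (by linarith)
    rw [← h2]
    constructor <;> intro h <;> nlinarith [h, hbσ, hσ]
  · rw [lt_div_iff₀ hpos]
    have h2 : (1 + γ * a / σ) < v ^ (-γ) ↔ v < (1 + γ * a / σ) ^ (-(1/γ)) := by
      nth_rewrite 1 [← hcb]
      exact Real.rpow_lt_rpow_iff_of_neg hcpos hv (by linarith)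
    rw [← h2]
    constructor <;> intro h <;> nlinarith [h, hbσ, hσ]

lemma GP_Tlt {γ σ : ℝ} (hγneg : γ < 0) (hσ : 0 < σ) {v : ℝ} (hv : 0 < v) :
    σ * (v ^ (-γ) - 1) / γ < σ / (-γ) := by
  have ht : 0 < v ^ (-γ) := Real.rpow_pos_of_pos hv _
  have h1 : σ * (v ^ (-γ) - 1) / γ = σ * (1 - v ^ (-γ)) / (-γ) := by
    rw [div_eq_div_iff hγneg.ne (neg_ne_zero.2 hγneg.ne)]
    ring
  rw [h1, div_lt_div_iff₀ (by linarith) (by linarith)]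
  nlinarith [mul_pos (mul_pos hσ ht) (neg_pos.2 hγneg)]

lemma GP_map_eq (γ σ : ℝ) (hγ0 : γ ≠ 0) (hσ : 0 < σ)
    (μ : Measure ℝ) [IsProbabilityMeasure μ]
    (hsupp0 : μ (Set.Iio 0) = 0)
    (hsupp1 : γ < 0 → μ (Set.Ici (σ / (-γ))) = 0)
    (hsurv : ∀ x : ℝ, 0 ≤ x → (γ < 0 → x < σ / (-γ)) →
      μ (Set.Ioi x) = ENNReal.ofReal ((1 + γ * x / σ) ^ (-(1/γ)))) :
    μ = Measure.map (fun v : ℝ => σ * (v ^ (-γ) - 1) / γ)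
      (volume.restrict (Set.Ioo 0 1)) := by
  set T : ℝ → ℝ := fun v => σ * (v ^ (-γ) - 1) / γ with hTdef
  have hTm : Measurable T := by
    apply Measurable.div_const
    apply Measurable.const_mul
    exact Measurable.sub (by measurability) measurable_const
  haveI : IsProbabilityMeasure (volume.restrict (Set.Ioo (0:ℝ) 1)) := by
    constructor
    simp [Real.volume_Ioo]
  haveI : IsProbabilityMeasure (Measure.map T (volume.restrict (Set.Ioo (0:ℝ) 1))) :=
    Measure.isProbabilityMeasure_map hTm.aemeasurable
  have hIoi : ∀ a : ℝ, μ (Set.Ioi a)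
      = Measure.map T (volume.restrict (Set.Ioo (0:ℝ) 1)) (Set.Ioi a) := by
    intro a
    rw [Measure.map_apply hTm measurableSet_Ioi,
      Measure.restrict_apply (hTm measurableSet_Ioi)]
    by_cases ha : a < 0
    · have h1 : T ⁻¹' (Set.Ioi a) ∩ Set.Ioo 0 1 = Set.Ioo 0 1 :=
        Set.inter_eq_right.mpr (fun v hv => lt_trans ha (GP_Tpos hγ0 hσ hv))
      have h2 : μ (Set.Ioi a) = 1 := by
        refine le_antisymm prob_le_one ?_
        have h3 : μ (Set.Iic a) = 0 :=
          measure_mono_null (fun x hx => lt_of_le_of_lt hx ha) hsupp0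
        calc (1:ℝ≥0∞) = μ (Set.Iic a ∪ Set.Ioi a) := by rw [Set.Iic_union_Ioi, measure_univ]
          _ ≤ μ (Set.Iic a) + μ (Set.Ioi a) := measure_union_le _ _
          _ = μ (Set.Ioi a) := by rw [h3, zero_add]
      rw [h1, h2, Real.volume_Ioo]
      simp
    · push_neg at ha
      by_cases hcut : γ < 0 ∧ σ / (-γ) ≤ a
      · obtain ⟨hγneg, hle⟩ := hcut
        have h1 : μ (Set.Ioi a) = 0 :=
          measure_mono_null (fun x hx => le_trans hle (le_of_lt hx)) (hsupp1 hγneg)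
        have h2 : T ⁻¹' (Set.Ioi a) ∩ Set.Ioo 0 1 = ∅ := by
          ext v
          simp only [Set.mem_inter_iff, Set.mem_preimage, Set.mem_Ioi, Set.mem_Ioo,
            Set.mem_empty_iff_false, iff_false, not_and]
          intro hT hv0
          intro hv1
          exact absurd hT (not_lt.2 (le_of_lt (lt_of_lt_of_le (GP_Tlt hγneg hσ hv0) hle)))
        rw [h1, h2]
        simp
      · have hb : 0 < 1 + γ * a / σ := by
          rcases hγ0.lt_or_gt with hneg | hpos
          · have hlt : a < σ / (-γ) := by
              by_contra hcon
              exact hcut ⟨hneg, not_lt.1 hcon⟩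
            rw [lt_div_iff₀ (by linarith)] at hlt
            have : 0 < σ + γ * a := by nlinarith
            have h4 : 1 + γ * a / σ = (σ + γ * a) / σ := by field_simp
            rw [h4]
            positivity
          · have : 0 ≤ γ * a / σ := by positivity
            linarith
        have hlt' : γ < 0 → a < σ / (-γ) := by
          intro hγneg
          by_contra hcon
          exact hcut ⟨hγneg, not_lt.1 hcon⟩
        rw [hsurv a ha hlt']
        have hc1 : (1 + γ * a / σ) ^ (-(1/γ)) ≤ 1 := by
          rcases hγ0.lt_or_gt with hneg | hpos
          · have hba : γ * a ≤ 0 := mul_nonpos_of_nonpos_of_nonneg hneg.le ha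
            have hb1 : 1 + γ * a / σ ≤ 1 := by
              have : γ * a / σ ≤ 0 := div_nonpos_of_nonpos_of_nonneg hba hσ.le
              linarith
            exact Real.rpow_le_one hb.le hb1
              (by rw [neg_nonneg]; exact le_of_lt (div_neg_of_pos_of_neg one_pos hneg))
          · have hb1 : 1 ≤ 1 + γ * a / σ := by
              have : 0 ≤ γ * a / σ := by positivity
              linarith
            refine Real.rpow_le_one_of_one_le_of_nonpos hb1 ?_
            simp only [neg_nonpos]
            positivity
        have h1 : T ⁻¹' (Set.Ioi a) ∩ Set.Ioo 0 1
            = Set.Ioo 0 ((1 + γ * a / σ) ^ (-(1/γ))) := by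
          ext v
          simp only [Set.mem_inter_iff, Set.mem_preimage, Set.mem_Ioi, Set.mem_Ioo]
          constructor
          · rintro ⟨hT, hv0, hv1⟩
            exact ⟨hv0, (GP_Tgt_iff hγ0 hσ hb hv0).1 hT⟩
          · rintro ⟨hv0, hvc⟩
            exact ⟨(GP_Tgt_iff hγ0 hσ hb hv0).2 hvc, hv0, lt_of_lt_of_le hvc hc1⟩
        rw [h1, Real.volume_Ioo, sub_zero]
  refine MeasureTheory.Measure.ext_of_Iic μ _ (fun a => ?_)
  have h1 := measure_compl (measurableSet_Ioi (a := a)) (measure_ne_top μ _)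
  have h2 := measure_compl (measurableSet_Ioi (a := a))
    (measure_ne_top (Measure.map T (volume.restrict (Set.Ioo (0:ℝ) 1))) _)
  rw [Set.compl_Ioi] at h1 h2
  rw [h1, h2, hIoi a, measure_univ, measure_univ]

lemma GP_transfer (γ σ : ℝ) (hγ0 : γ ≠ 0) (hσ : 0 < σ)
    (μ : Measure ℝ) [IsProbabilityMeasure μ]
    (hsupp0 : μ (Set.Iio 0) = 0)
    (hsupp1 : γ < 0 → μ (Set.Ici (σ / (-γ))) = 0)
    (hsurv : ∀ x : ℝ, 0 ≤ x → (γ < 0 → x < σ / (-γ)) →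
      μ (Set.Ioi x) = ENNReal.ofReal ((1 + γ * x / σ) ^ (-(1/γ))))
    (F : ℝ → ℝ) (hF : Measurable F) :
    ∫ x, F x ∂μ = ∫ v in Set.Ioo (0:ℝ) 1, F (σ * (v ^ (-γ) - 1) / γ) := by
  have hTm : Measurable (fun v : ℝ => σ * (v ^ (-γ) - 1) / γ) := by
    apply Measurable.div_const
    apply Measurable.const_mul
    exact Measurable.sub (by measurability) measurable_const
  rw [GP_map_eq γ σ hγ0 hσ μ hsupp0 hsupp1 hsurv]
  exact integral_map hTm.aemeasurable hF.aestronglyMeasurable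

/-! ### Elementary integrals on (0,1) -/

lemma GP_rpow_integrableOn {r : ℝ} (hr : -1 < r) :
    IntegrableOn (fun v : ℝ => v ^ r) (Set.Ioo 0 1) volume := by
  have h := (intervalIntegral.intervalIntegrable_rpow' (a := 0) (b := 1) hr)
  rw [intervalIntegrable_iff_integrableOn_Ioc_of_le (by norm_num)] at h
  exact h.mono_set Set.Ioo_subset_Ioc_self

lemma GP_rpow_integral01 {r : ℝ} (hr : -1 < r) :
    ∫ v in Set.Ioo 0 1, (v : ℝ) ^ r = 1 / (r + 1) := by
  rw [← MeasureTheory.integral_Ioc_eq_integral_Ioo,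
    ← intervalIntegral.integral_of_le (by norm_num : (0:ℝ) ≤ 1)]
  rw [integral_rpow (Or.inl hr)]
  rw [Real.one_rpow, Real.zero_rpow (by linarith)]
  ring

lemma GP_log_integrableOn : IntegrableOn Real.log (Set.Ioo 0 1) volume := by
  have hg : IntegrableOn (fun v : ℝ => 2 * v ^ (-(1/2) : ℝ)) (Set.Ioo 0 1) volume := by
    have h := (intervalIntegral.intervalIntegrable_rpow' (a := 0) (b := 1)
      (r := (-(1/2) : ℝ)) (by norm_num))
    rw [intervalIntegrable_iff_integrableOn_Ioc_of_le (by norm_num)] at h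
    exact (h.mono_set Set.Ioo_subset_Ioc_self).const_mul 2
  refine Integrable.mono hg (Real.measurable_log.aestronglyMeasurable) ?_
  rw [ae_restrict_iff' measurableSet_Ioo]
  filter_upwards with v hv
  obtain ⟨h0, h1⟩ := hv
  have hlogneg : Real.log v ≤ 0 := Real.log_nonpos h0.le h1.le
  have hb : -Real.log v ≤ 2 * v ^ (-(1/2) : ℝ) := by
    have h2 : Real.log (v ^ (-(1/2) : ℝ)) ≤ v ^ (-(1/2) : ℝ) - 1 :=
      Real.log_le_sub_one_of_pos (Real.rpow_pos_of_pos h0 _)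
    rw [Real.log_rpow h0] at h2
    nlinarith [Real.rpow_pos_of_pos h0 (-(1/2) : ℝ)]
  have hpos : (0:ℝ) ≤ 2 * v ^ (-(1/2) : ℝ) := by positivity
  rw [Real.norm_eq_abs, Real.norm_eq_abs, abs_of_nonneg hpos, abs_of_nonpos hlogneg]
  linarith

lemma GP_log_integral01 : ∫ v in Set.Ioo 0 1, Real.log v = -1 := by
  have hcont : ContinuousOn (fun v : ℝ => v * Real.log v - v) (Set.Icc 0 1) :=
    (Real.continuous_mul_log.sub continuous_id).continuousOn
  have hderiv : ∀ v ∈ Set.Ioo (0:ℝ) 1,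
      HasDerivWithinAt (fun v : ℝ => v * Real.log v - v) (Real.log v) (Set.Ioi v) v := by
    intro v hv
    have h : HasDerivAt (fun v : ℝ => v * Real.log v - v) (Real.log v) v := by
      have h1 : HasDerivAt (fun v : ℝ => v * Real.log v) (Real.log v + 1) v := by
        have := (hasDerivAt_id v).mul (Real.hasDerivAt_log (ne_of_gt hv.1))
        simpa [mul_inv_cancel₀ (ne_of_gt hv.1), Pi.mul_def] using this
      simpa [Pi.sub_def] using h1.sub (hasDerivAt_id v)
    exact h.hasDerivWithinAt
  have hint : IntervalIntegrable Real.log volume 0 1 := by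
    rw [intervalIntegrable_iff_integrableOn_Ioc_of_le (by norm_num)]
    rw [integrableOn_Ioc_iff_integrableOn_Ioo]
    exact GP_log_integrableOn
  have := intervalIntegral.integral_eq_sub_of_hasDeriv_right_of_le (by norm_num : (0:ℝ) ≤ 1)
    hcont hderiv hint
  rw [← MeasureTheory.integral_Ioc_eq_integral_Ioo,
    ← intervalIntegral.integral_of_le (by norm_num : (0:ℝ) ≤ 1)]
  simp at this
  simpa using this

lemma GP_integral_powlog {γ : ℝ} (hγ : -1/2 < γ) (c0 c1 c2 c3 : ℝ) :
    ∫ v in Set.Ioo (0:ℝ) 1, (c0 + c1 * v^γ + c2 * v^(2*γ) + c3 * Real.log v)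
      = c0 + c1 * (1/(γ+1)) + c2 * (1/(2*γ+1)) - c3 := by
  have h1 : (-1:ℝ) < γ := by linarith
  have h2 : (-1:ℝ) < 2*γ := by linarith
  have i0 : IntegrableOn (fun _ : ℝ => c0) (Set.Ioo (0:ℝ) 1) volume := by
    refine integrableOn_const ?_
    rw [Real.volume_Ioo]
    exact ENNReal.ofReal_ne_top
  have i1 : IntegrableOn (fun v : ℝ => c1 * v^γ) (Set.Ioo (0:ℝ) 1) volume :=
    (GP_rpow_integrableOn h1).const_mul c1
  have i2 : IntegrableOn (fun v : ℝ => c2 * v^(2*γ)) (Set.Ioo (0:ℝ) 1) volume :=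
    (GP_rpow_integrableOn h2).const_mul c2
  have i3 : IntegrableOn (fun v : ℝ => c3 * Real.log v) (Set.Ioo (0:ℝ) 1) volume :=
    GP_log_integrableOn.const_mul c3
  have i01 : IntegrableOn (fun v : ℝ => c0 + c1 * v ^ γ) (Set.Ioo (0:ℝ) 1) volume := i0.add i1
  have i012 : IntegrableOn (fun v : ℝ => c0 + c1 * v ^ γ + c2 * v ^ (2*γ))
      (Set.Ioo (0:ℝ) 1) volume := i01.add i2
  rw [integral_add i012 i3, integral_add i01 i2, integral_add i0 i1]
  rw [MeasureTheory.integral_const_mul, MeasureTheory.integral_const_mul,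
    MeasureTheory.integral_const_mul,
    GP_rpow_integral01 h1, GP_rpow_integral01 h2, GP_log_integral01, setIntegral_const]
  rw [Real.volume_real_Ioo]
  norm_num
  ring

/-! ### Pointwise composition identities -/

lemma GP_comp1 (γ σ : ℝ) (hγ0 : γ ≠ 0) (hσ : 0 < σ) {v : ℝ} (hv : v ∈ Set.Ioo (0:ℝ) 1) :
    -(2/γ^3) * Real.log (1 + γ*(σ*(v^(-γ)-1)/γ)/σ)
      + (2/γ^2) * (((σ*(v^(-γ)-1)/γ)/σ)/(1+γ*(σ*(v^(-γ)-1)/γ)/σ))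
      + (1+1/γ) * (((σ*(v^(-γ)-1)/γ)/σ)/(1+γ*(σ*(v^(-γ)-1)/γ)/σ))^2
    = (γ+3)/γ^3 + (-(2*γ+4)/γ^3) * v^γ + ((γ+1)/γ^3) * v^(2*γ)
      + (2/γ^2) * Real.log v := by
  have hv0 := hv.1
  have ht : 0 < v^(-γ) := Real.rpow_pos_of_pos hv0 _
  have hw : 1 + γ*(σ*(v^(-γ)-1)/γ)/σ = v^(-γ) := by field_simp; ring
  have hγv : v^γ = (v^(-γ))⁻¹ := by rw [Real.rpow_neg hv0.le, inv_inv]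
  have h2γ : v^(2*γ) = (v^(-γ))⁻¹ * (v^(-γ))⁻¹ := by
    rw [show (2*γ) = γ + γ by ring, Real.rpow_add hv0, hγv]
  have hlog : Real.log (v^(-γ)) = -γ * Real.log v := Real.log_rpow hv0 _
  rw [hw, hlog, hγv, h2γ]
  field_simp
  ring

lemma GP_comp2 (γ σ : ℝ) (hγ0 : γ ≠ 0) (hσ : 0 < σ) {v : ℝ} (hv : v ∈ Set.Ioo (0:ℝ) 1) :
    1/σ^2 - (1+1/γ) * (γ*(σ*(v^(-γ)-1)/γ)) * (2*σ+γ*(σ*(v^(-γ)-1)/γ))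
        / (σ*(σ+γ*(σ*(v^(-γ)-1)/γ)))^2
    = -(1/(σ^2*γ)) + (0:ℝ) * v^γ + ((γ+1)/(σ^2*γ)) * v^(2*γ) + (0:ℝ) * Real.log v := by
  have hv0 := hv.1
  have ht : 0 < v^(-γ) := Real.rpow_pos_of_pos hv0 _
  have h2γ : v^(2*γ) = (v^(-γ))⁻¹ * (v^(-γ))⁻¹ := by
    rw [show (2*γ) = γ + γ by ring, Real.rpow_add hv0, Real.rpow_neg hv0.le, inv_inv]
  have hσγ : σ + γ*(σ*(v^(-γ)-1)/γ) = σ * v^(-γ) := by field_simp; ring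
  have hγT : γ*(σ*(v^(-γ)-1)/γ) = σ*(v^(-γ)-1) := by field_simp
  rw [hσγ, hγT, h2γ]
  field_simp
  ring

lemma GP_comp3 (γ σ : ℝ) (hγ0 : γ ≠ 0) (hσ : 0 < σ) {v : ℝ} (hv : v ∈ Set.Ioo (0:ℝ) 1) :
    (σ*(v^(-γ)-1)/γ) * (σ - σ*(v^(-γ)-1)/γ) / (σ*(σ+γ*(σ*(v^(-γ)-1)/γ))^2)
    = -(1/(σ*γ^2)) + ((γ+2)/(σ*γ^2)) * v^γ + (-(γ+1)/(σ*γ^2)) * v^(2*γ)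
      + (0:ℝ) * Real.log v := by
  have hv0 := hv.1
  have ht : 0 < v^(-γ) := Real.rpow_pos_of_pos hv0 _
  have hγv : v^γ = (v^(-γ))⁻¹ := by rw [Real.rpow_neg hv0.le, inv_inv]
  have h2γ : v^(2*γ) = (v^(-γ))⁻¹ * (v^(-γ))⁻¹ := by
    rw [show (2*γ) = γ + γ by ring, Real.rpow_add hv0, hγv]
  have hσγ : σ + γ*(σ*(v^(-γ)-1)/γ) = σ * v^(-γ) := by field_simp; ring
  rw [hσγ, hγv, h2γ]
  field_simp
  ring

end GPaux

/-- If `X ~ GP_{γ,σ}` with `γ > -1/2`, `γ ≠ 0`, `σ > 0`, then the negative expected second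
partial derivatives of `ℓ` give the Fisher information:
`-E[∂²ℓ/∂γ²] = 2/((1+γ)(1+2γ))`, `-E[∂²ℓ/∂σ²]·σ² = 1/(1+2γ)`,
`-E[∂²ℓ/∂γ∂σ]·σ = 1/((1+γ)(1+2γ))`. -/
theorem stmt_7 (γ σ : ℝ) (hγ0 : γ ≠ 0) (hγ : -1/2 < γ) (hσ : 0 < σ)
    (μ : Measure ℝ) [IsProbabilityMeasure μ]
    (hsupp0 : μ (Set.Iio 0) = 0)
    (hsupp1 : γ < 0 → μ (Set.Ici (σ / (-γ))) = 0)
    (hsurv : ∀ x : ℝ, 0 ≤ x → (γ < 0 → x < σ / (-γ)) →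
      μ (Set.Ioi x) = ENNReal.ofReal ((1 + γ * x / σ) ^ (-(1/γ)))) :
    -(∫ x, deriv (deriv fun g => gpLogLik g σ x) γ ∂μ) = 2 / ((1+γ) * (1+2*γ)) ∧
    -(∫ x, deriv (deriv fun s => gpLogLik γ s x) σ ∂μ) * σ^2 = 1 / (1+2*γ) ∧
    -(∫ x, deriv (fun g => deriv (fun s => gpLogLik g s x) σ) γ ∂μ) * σ =
      1 / ((1+γ) * (1+2*γ)) := by
  have h1γ : (0:ℝ) < 1 + γ := by linarith
  have h2γ : (0:ℝ) < 1 + 2*γ := by linarith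
  have hγ1ne : γ + 1 ≠ 0 := by linarith
  have hγ2ne : 2*γ + 1 ≠ 0 := by linarith
  have hwx : ∀ x : ℝ, 0 ≤ x → (γ < 0 → x < σ/(-γ)) → 0 < 1 + γ*x/σ := by
    intro x hx hlt
    rcases hγ0.lt_or_gt with hneg | hpos
    · have h := hlt hneg
      rw [lt_div_iff₀ (neg_pos.2 hneg)] at h
      have h2 : -1 * σ < γ * x := by nlinarith
      have h3 : (-1:ℝ) < γ*x/σ := by
        rw [lt_div_iff₀ hσ]
        linarith
      linarith
    · have : 0 ≤ γ*x/σ := by positivity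
      linarith
  have hwx' : ∀ x : ℝ, 0 ≤ x → (γ < 0 → x < σ/(-γ)) → 0 < σ + γ*x := by
    intro x hx hlt
    have h := hwx x hx hlt
    have hid : (1 + γ*x/σ)*σ = σ + γ*x := by field_simp
    nlinarith [mul_pos h hσ]
  have hsuppae : ∀ᵐ x ∂μ, 0 ≤ x ∧ (γ < 0 → x < σ / (-γ)) := by
    have h0 : ∀ᵐ x ∂μ, 0 ≤ x := by
      rw [ae_iff]
      have : {x : ℝ | ¬ 0 ≤ x} = Set.Iio 0 := by
        ext x; simp [not_le, Set.mem_Iio]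
      rw [this]
      exact hsupp0
    have h1 : ∀ᵐ x ∂μ, (γ < 0 → x < σ / (-γ)) := by
      by_cases hγneg : γ < 0
      · rw [ae_iff]
        have : {x : ℝ | ¬ (γ < 0 → x < σ / (-γ))} = Set.Ici (σ / (-γ)) := by
          ext x; simp [hγneg, not_lt, Set.mem_Ici]
        rw [this]
        exact hsupp1 hγneg
      · filter_upwards with x
        intro h
        exact absurd h hγneg
    exact h0.and h1
  have hm1 : Measurable (fun x : ℝ => -(2/γ^3) * Real.log (1 + γ*x/σ)
      + (2/γ^2) * ((x/σ)/(1+γ*x/σ)) + (1+1/γ) * ((x/σ)/(1+γ*x/σ))^2) := by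
    have m1 : Measurable (fun x : ℝ => 1 + γ*x/σ) := by fun_prop
    have mlog : Measurable (fun x : ℝ => Real.log (1 + γ*x/σ)) := Real.measurable_log.comp m1
    have mq : Measurable (fun x : ℝ => (x/σ)/(1+γ*x/σ)) := by fun_prop
    exact ((mlog.const_mul _).add (mq.const_mul _)).add ((mq.pow_const 2).const_mul _)
  have hm2 : Measurable (fun x : ℝ =>
      1/σ^2 - (1+1/γ) * (γ*x) * (2*σ+γ*x) / (σ*(σ+γ*x))^2) := by fun_prop
  have hm3 : Measurable (fun x : ℝ => x*(σ-x)/(σ*(σ+γ*x)^2)) := by fun_prop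
  refine ⟨?_, ?_, ?_⟩
  · -- second derivative in γ
    have hae : (fun x => deriv (deriv fun g => gpLogLik g σ x) γ) =ᵐ[μ]
        (fun x => -(2/γ^3) * Real.log (1 + γ*x/σ) + (2/γ^2) * ((x/σ)/(1+γ*x/σ))
          + (1+1/γ) * ((x/σ)/(1+γ*x/σ))^2) := by
      filter_upwards [hsuppae] with x hx
      exact GP_deriv2_gamma σ x hγ0 (hwx x hx.1 hx.2)
    rw [integral_congr_ae hae,
      GP_transfer γ σ hγ0 hσ μ hsupp0 hsupp1 hsurv _ hm1,
      setIntegral_congr_fun measurableSet_Ioo (fun v hv => GP_comp1 γ σ hγ0 hσ hv),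
      GP_integral_powlog hγ]
    have h2γ' : γ * 2 + 1 ≠ 0 := by linarith
    have h2γ'' : 1 + γ * 2 ≠ 0 := by linarith
    field_simp
    ring
  · -- second derivative in σ
    have hae : (fun x => deriv (deriv fun s => gpLogLik γ s x) σ) =ᵐ[μ]
        (fun x => 1/σ^2 - (1+1/γ) * (γ*x) * (2*σ+γ*x) / (σ*(σ+γ*x))^2) := by
      filter_upwards [hsuppae] with x hx
      exact GP_deriv2_sigma γ x hγ0 hσ (hwx' x hx.1 hx.2)
    rw [integral_congr_ae hae,
      GP_transfer γ σ hγ0 hσ μ hsupp0 hsupp1 hsurv _ hm2,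
      setIntegral_congr_fun measurableSet_Ioo (fun v hv => GP_comp2 γ σ hγ0 hσ hv),
      GP_integral_powlog hγ]
    have h2γ' : γ * 2 + 1 ≠ 0 := by linarith
    have h2γ'' : 1 + γ * 2 ≠ 0 := by linarith
    field_simp
    ring
  · -- mixed derivative
    have hae : (fun x => deriv (fun g => deriv (fun s => gpLogLik g s x) σ) γ) =ᵐ[μ]
        (fun x => x*(σ-x)/(σ*(σ+γ*x)^2)) := by
      filter_upwards [hsuppae] with x hx
      exact GP_deriv_cross x hγ0 hσ (hwx' x hx.1 hx.2)
    rw [integral_congr_ae hae,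
      GP_transfer γ σ hγ0 hσ μ hsupp0 hsupp1 hsurv _ hm3,
      setIntegral_congr_fun measurableSet_Ioo (fun v hv => GP_comp3 γ σ hγ0 hσ hv),
      GP_integral_powlog hγ]
    have h2γ' : γ * 2 + 1 ≠ 0 := by linarith
    have h2γ'' : 1 + γ * 2 ≠ 0 := by linarith
    field_simp
    ring
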